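/- Let G be a k-partite graph with parts V_1,...,V_k. If the CNF formula Clique_k(G) has a sums-of-squares refutation of domain-degree d (where the domain is the index set [k] of the clique positions), then the polynomial system Block_k(G) has a sums-of-squares refutation of domain-degree d. -/

import Mathlib

open MvPolynomial

/-- The domain-degree of a polynomial: the maximum, over its monomials, of the number of
distinct domain indices mentioned by the variables of the monomial. -/
def domDeg {σ D : Type*} [DecidableEq D] (idx : σ → D) (p : MvPolynomial σ ℝ) : ℕ :=
  p.support.sup fun m => (m.support.image idx).card

/-- A polynomial expressible as a sum of squares. -/
def IsSOS {σ : Type*} (u : MvPolynomial σ ℝ) : Prop :=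
  ∃ qs : List (MvPolynomial σ ℝ), u = (qs.map (· ^ 2)).sum

/-- The ideal generated by `x^2 - x` for every variable (the multilinear setting). -/
noncomputable def multilinIdeal (σ : Type*) : Ideal (MvPolynomial σ ℝ) :=
  Ideal.span {q | ∃ s : σ, q = X s ^ 2 - X s}

/-- The system `eqs = 0`, `ineqs ≥ 0` has a sums-of-squares refutation of domain-degree at
most `d`: an identity `-1 = Σ g_j f_j + Σ u_j h_j + u_0` in the multilinear ring, with
each `u_j` and `u_0` a sum of squares and every summand of domain-degree at most `d`. -/
def HasSOSRefutationDomDeg {σ D : Type*} [DecidableEq D] (idx : σ → D)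
    (eqs ineqs : Set (MvPolynomial σ ℝ)) (d : ℕ) : Prop :=
  ∃ (fs hs : List (MvPolynomial σ ℝ × MvPolynomial σ ℝ)) (u0 : MvPolynomial σ ℝ),
    (∀ q ∈ fs, q.1 ∈ eqs) ∧ (∀ q ∈ hs, q.1 ∈ ineqs) ∧
    (∀ q ∈ hs, IsSOS q.2) ∧ IsSOS u0 ∧
    (∀ q ∈ fs, domDeg idx (q.2 * q.1) ≤ d) ∧
    (∀ q ∈ hs, domDeg idx (q.2 * q.1) ≤ d) ∧
    domDeg idx u0 ≤ d ∧
    (-1 : MvPolynomial σ ℝ) -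
        ((fs.map fun q => q.2 * q.1).sum + (hs.map fun q => q.2 * q.1).sum + u0)
      ∈ multilinIdeal σ

/-- Vertices of a `k`-partite graph: part `i` is `{i} × Fin (n i)`. -/
abbrev Vtx (k : ℕ) (n : Fin k → ℕ) := Σ i : Fin k, Fin (n i)

/-- Variables of `Clique_k(G)`: `Sum.inl (i, v)` is `x_{i,v}`, `Sum.inr (i, j)` is `z_{i,j}`. -/
abbrev CliqueVar (k : ℕ) (n : Fin k → ℕ) (N : ℕ) := (Fin k × Vtx k n) ⊕ (Fin k × Fin (N + 1))

/-- The domain index (in `[k]`, the set of clique positions) mentioned by a variable. -/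
def cliqueIdx {k : ℕ} {n : Fin k → ℕ} {N : ℕ} : CliqueVar k n N → Fin k
  | Sum.inl (i, _) => i
  | Sum.inr (i, _) => i

/-- The polynomial encoding `L(C) - 1 ≥ 0` of the clauses of `Clique_k(G)`, with vertex
enumeration `e : Fin N ≃ Vtx k n`. -/
def cliqueIneqs (k : ℕ) (n : Fin k → ℕ) (N : ℕ) (G : SimpleGraph (Vtx k n))
    (e : Fin N ≃ Vtx k n) : Set (MvPolynomial (CliqueVar k n N) ℝ) :=
  {p | ∃ (i i' : Fin k) (u v : Vtx k n), i ≠ i' ∧ ¬ G.Adj u v ∧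
        p = 1 - X (Sum.inl (i, u)) - X (Sum.inl (i', v))} ∪
  {p | ∃ (i : Fin k) (u v : Vtx k n), u ≠ v ∧
        p = 1 - X (Sum.inl (i, u)) - X (Sum.inl (i, v))} ∪
  {p | ∃ i : Fin k, p = X (Sum.inr (i, (0 : Fin (N + 1)))) - 1} ∪
  {p | ∃ (i : Fin k) (j : Fin N),
        p = ((1 - X (Sum.inr (i, j.castSucc))) + X (Sum.inl (i, e j))
              + X (Sum.inr (i, j.succ))) - 1} ∪
  {p | ∃ i : Fin k, p = (1 - X (Sum.inr (i, Fin.last N))) - 1}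

/-- The equations `Σ_{v ∈ V_i} x_v = 1` of `Block_k(G)`. -/
def blockEqs (k : ℕ) (n : Fin k → ℕ) : Set (MvPolynomial (Vtx k n) ℝ) :=
  {p | ∃ i : Fin k, p = (∑ w : Fin (n i), X (⟨i, w⟩ : Vtx k n)) - 1}

/-- The inequalities `x_u + x_v ≤ 1`, i.e. `1 - x_u - x_v ≥ 0`, for non-edges across
distinct blocks. -/
def blockIneqs (k : ℕ) (n : Fin k → ℕ) (G : SimpleGraph (Vtx k n)) :
    Set (MvPolynomial (Vtx k n) ℝ) :=
  {p | ∃ u v : Vtx k n, u.1 ≠ v.1 ∧ ¬ G.Adj u v ∧ p = 1 - X u - X v}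

set_option linter.unusedSectionVars false
set_option maxHeartbeats 1000000

section Helpers

variable {σ D : Type*} [DecidableEq σ] [DecidableEq D] (f : σ → D)

/-- All monomials of `p` mention only indices in `I`. -/
def IdxLE (I : Finset D) (p : MvPolynomial σ ℝ) : Prop :=
  ∀ μ ∈ p.support, μ.support.image f ⊆ I

variable {f}

lemma idxLE_mono {I J : Finset D} (hIJ : I ⊆ J) {p : MvPolynomial σ ℝ} (h : IdxLE f I p) :
    IdxLE f J p := fun μ hμ => (h μ hμ).trans hIJ

lemma idxLE_zero (I : Finset D) : IdxLE f I (0 : MvPolynomial σ ℝ) := by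
  intro μ hμ; simp at hμ

lemma idxLE_C (I : Finset D) (c : ℝ) : IdxLE f I (C c : MvPolynomial σ ℝ) := by
  intro μ hμ
  have : (0 : σ →₀ ℕ) = μ := by
    by_contra hne
    simp [MvPolynomial.mem_support_iff, MvPolynomial.coeff_C, hne] at hμ
  subst this
  simp

lemma idxLE_one (I : Finset D) : IdxLE f I (1 : MvPolynomial σ ℝ) := by
  simpa using idxLE_C (f := f) I 1

lemma idxLE_X (s : σ) : IdxLE f {f s} (X s : MvPolynomial σ ℝ) := by
  intro μ hμ
  rw [MvPolynomial.support_X, Finset.mem_singleton] at hμ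
  subst hμ
  rw [Finsupp.support_single_ne_zero _ one_ne_zero]
  simp

lemma idxLE_add {I : Finset D} {p q : MvPolynomial σ ℝ} (hp : IdxLE f I p) (hq : IdxLE f I q) :
    IdxLE f I (p + q) := by
  intro μ hμ
  rcases Finset.mem_union.mp (MvPolynomial.support_add hμ) with h | h
  · exact hp μ h
  · exact hq μ h

lemma idxLE_neg {I : Finset D} {p : MvPolynomial σ ℝ} (hp : IdxLE f I p) : IdxLE f I (-p) := by
  intro μ hμ; rw [MvPolynomial.support_neg] at hμ; exact hp μ hμ

lemma idxLE_sub {I : Finset D} {p q : MvPolynomial σ ℝ} (hp : IdxLE f I p) (hq : IdxLE f I q) :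
    IdxLE f I (p - q) := by
  rw [sub_eq_add_neg]; exact idxLE_add hp (idxLE_neg hq)

lemma idxLE_mul {I : Finset D} {p q : MvPolynomial σ ℝ} (hp : IdxLE f I p) (hq : IdxLE f I q) :
    IdxLE f I (p * q) := by
  intro μ hμ
  obtain ⟨a, ha, b, hb, rfl⟩ := Finset.mem_add.mp (MvPolynomial.support_mul p q hμ)
  intro j hj
  obtain ⟨x, hx, rfl⟩ := Finset.mem_image.mp hj
  rcases Finset.mem_union.mp (Finsupp.support_add hx) with h | h
  · exact hp a ha (Finset.mem_image_of_mem f h)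
  · exact hq b hb (Finset.mem_image_of_mem f h)

lemma idxLE_prod {α : Type*} {I : Finset D} (T : Finset α) (g : α → MvPolynomial σ ℝ)
    (h : ∀ a ∈ T, IdxLE f I (g a)) : IdxLE f I (∏ a ∈ T, g a) := by
  classical
  induction T using Finset.induction_on with
  | empty => simpa using idxLE_one I
  | insert _ _ hni ih =>
    rw [Finset.prod_insert hni]
    exact idxLE_mul (h _ (Finset.mem_insert_self _ _))
      (ih fun a ha => h a (Finset.mem_insert_of_mem ha))

lemma idxLE_pow {I : Finset D} {p : MvPolynomial σ ℝ} (hp : IdxLE f I p) (t : ℕ) :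
    IdxLE f I (p ^ t) := by
  induction t with
  | zero => simpa using idxLE_one I
  | succ t ih => rw [pow_succ]; exact idxLE_mul ih hp

lemma idxLE_sum {α : Type*} {I : Finset D} (T : Finset α) (g : α → MvPolynomial σ ℝ)
    (h : ∀ a ∈ T, IdxLE f I (g a)) : IdxLE f I (∑ a ∈ T, g a) := by
  intro μ hμ
  obtain ⟨a, ha, hmem⟩ := Finset.mem_biUnion.mp (MvPolynomial.support_sum hμ)
  exact h a ha μ hmem

lemma domDeg_le_iff {p : MvPolynomial σ ℝ} {d : ℕ} :
    domDeg f p ≤ d ↔ ∀ μ ∈ p.support, (μ.support.image f).card ≤ d := Finset.sup_le_iff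

lemma domDeg_zero : domDeg f (0 : MvPolynomial σ ℝ) = 0 := by
  simp [domDeg]

lemma domDeg_add_le {p q : MvPolynomial σ ℝ} {d : ℕ} (hp : domDeg f p ≤ d)
    (hq : domDeg f q ≤ d) : domDeg f (p + q) ≤ d := by
  rw [domDeg_le_iff] at *
  intro μ hμ
  rcases Finset.mem_union.mp (MvPolynomial.support_add hμ) with h | h
  · exact hp μ h
  · exact hq μ h

/-- `v` has every monomial with index set within a set of size `≤ d` containing `i`. -/
def GoodAt (f : σ → D) (d : ℕ) (i : D) (v : MvPolynomial σ ℝ) : Prop :=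
  ∀ μ ∈ v.support, (insert i (μ.support.image f)).card ≤ d

lemma GoodAt.domDeg_le {d : ℕ} {i : D} {v : MvPolynomial σ ℝ} (h : GoodAt f d i v) :
    domDeg f v ≤ d := by
  rw [domDeg_le_iff]
  intro μ hμ
  exact le_trans (Finset.card_le_card (Finset.subset_insert i _)) (h μ hμ)

lemma GoodAt.mul {d : ℕ} {i : D} {v r : MvPolynomial σ ℝ} (h : GoodAt f d i v)
    (hr : IdxLE f {i} r) : GoodAt f d i (v * r) := by
  intro μ hμ
  obtain ⟨a, ha, b, hb, rfl⟩ := Finset.mem_add.mp (MvPolynomial.support_mul v r hμ)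
  refine le_trans (Finset.card_le_card ?_) (h a ha)
  intro j hj
  rcases Finset.mem_insert.mp hj with rfl | hj
  · exact Finset.mem_insert_self _ _
  obtain ⟨x, hx, rfl⟩ := Finset.mem_image.mp hj
  rcases Finset.mem_union.mp (Finsupp.support_add hx) with hxx | hxx
  · exact Finset.mem_insert_of_mem (Finset.mem_image_of_mem f hxx)
  · have := hr b hb (Finset.mem_image_of_mem f hxx)
    rw [Finset.mem_singleton] at this
    rw [this]
    exact Finset.mem_insert_self _ _

lemma GoodAt.domDeg_mul_le {d : ℕ} {i : D} {v r : MvPolynomial σ ℝ} (h : GoodAt f d i v)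
    (hr : IdxLE f {i} r) : domDeg f (v * r) ≤ d := (h.mul hr).domDeg_le

lemma GoodAt.add {d : ℕ} {i : D} {v w : MvPolynomial σ ℝ} (h : GoodAt f d i v)
    (h' : GoodAt f d i w) : GoodAt f d i (v + w) := by
  intro μ hμ
  rcases Finset.mem_union.mp (MvPolynomial.support_add hμ) with hh | hh
  · exact h μ hh
  · exact h' μ hh

lemma GoodAt.neg {d : ℕ} {i : D} {v : MvPolynomial σ ℝ} (h : GoodAt f d i v) :
    GoodAt f d i (-v) := by
  intro μ hμ; rw [MvPolynomial.support_neg] at hμ; exact h μ hμ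

end Helpers


section SOS

variable {σ : Type*}

lemma IsSOS.zero : IsSOS (0 : MvPolynomial σ ℝ) := ⟨[], by simp⟩

lemma IsSOS.sq (q : MvPolynomial σ ℝ) : IsSOS (q ^ 2) := ⟨[q], by simp⟩

lemma IsSOS.add {u v : MvPolynomial σ ℝ} (hu : IsSOS u) (hv : IsSOS v) : IsSOS (u + v) := by
  obtain ⟨l1, rfl⟩ := hu; obtain ⟨l2, rfl⟩ := hv
  exact ⟨l1 ++ l2, by simp⟩

private lemma list_sq_mul (l : List (MvPolynomial σ ℝ)) (q : MvPolynomial σ ℝ) :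
    ((l.map (· * q)).map (· ^ 2)).sum = (l.map (· ^ 2)).sum * q ^ 2 := by
  induction l with
  | nil => simp
  | cons a l ih =>
    simp only [List.map_cons, List.sum_cons, mul_pow, ← List.map_map] at *
    rw [ih]; ring

lemma IsSOS.mul_sq {u : MvPolynomial σ ℝ} (hu : IsSOS u) (q : MvPolynomial σ ℝ) :
    IsSOS (u * q ^ 2) := by
  obtain ⟨l, rfl⟩ := hu
  exact ⟨l.map (· * q), by rw [list_sq_mul]⟩

lemma IsSOS.mul_sum_sq {α : Type*} {u : MvPolynomial σ ℝ} (hu : IsSOS u) (T : Finset α)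
    (g : α → MvPolynomial σ ℝ) : IsSOS (u * ∑ a ∈ T, (g a) ^ 2) := by
  classical
  induction T using Finset.induction_on with
  | empty => simpa using IsSOS.zero
  | insert _ _ hni ih =>
    rw [Finset.sum_insert hni, mul_add]
    exact (hu.mul_sq _).add ih

lemma IsSOS.map {τ : Type*} (φ : MvPolynomial σ ℝ →ₐ[ℝ] MvPolynomial τ ℝ)
    {u : MvPolynomial σ ℝ} (hu : IsSOS u) : IsSOS (φ u) := by
  obtain ⟨l, rfl⟩ := hu
  refine ⟨l.map φ, ?_⟩
  rw [map_list_sum, List.map_map, List.map_map]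
  congr 1
  ext p
  simp [map_pow]

end SOS

section ML

variable {σ : Type*}

lemma X_sq_sub_mem (s : σ) : X s ^ 2 - X s ∈ multilinIdeal σ :=
  Ideal.subset_span ⟨s, rfl⟩

lemma idem_mul {p q : MvPolynomial σ ℝ} (hp : p ^ 2 - p ∈ multilinIdeal σ)
    (hq : q ^ 2 - q ∈ multilinIdeal σ) : (p * q) ^ 2 - p * q ∈ multilinIdeal σ := by
  have : (p * q) ^ 2 - p * q = q ^ 2 * (p ^ 2 - p) + p * (q ^ 2 - q) := by ring
  rw [this]
  exact add_mem (Ideal.mul_mem_left _ _ hp) (Ideal.mul_mem_left _ _ hq)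

lemma idem_one_sub {p : MvPolynomial σ ℝ} (hp : p ^ 2 - p ∈ multilinIdeal σ) :
    (1 - p) ^ 2 - (1 - p) ∈ multilinIdeal σ := by
  have : (1 - p) ^ 2 - (1 - p) = p ^ 2 - p := by ring
  rw [this]; exact hp

lemma idem_prod {α : Type*} (T : Finset α) (g : α → MvPolynomial σ ℝ)
    (h : ∀ a ∈ T, (g a) ^ 2 - g a ∈ multilinIdeal σ) :
    (∏ a ∈ T, g a) ^ 2 - ∏ a ∈ T, g a ∈ multilinIdeal σ := by
  classical
  induction T using Finset.induction_on with
  | empty => simpa using zero_mem _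
  | @insert a T hni ih =>
    rw [Finset.prod_insert hni]
    exact idem_mul (h _ (Finset.mem_insert_self _ _))
      (ih fun a ha => h a (Finset.mem_insert_of_mem ha))

end ML


section Extract

variable {σ D : Type*} [DecidableEq σ] [DecidableEq D] (f : σ → D)

lemma insert_image_subset_of (i : D) {m ν : σ →₀ ℕ} (h : ∀ x, f x ≠ i → ν x = m x) :
    insert i (ν.support.image f) ⊆ insert i (m.support.image f) := by
  intro j hj
  rcases Finset.mem_insert.mp hj with rfl | hj
  · exact Finset.mem_insert_self _ _
  obtain ⟨x, hx, rfl⟩ := Finset.mem_image.mp hj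
  by_cases hfx : f x = i
  · rw [hfx]; exact Finset.mem_insert_self _ _
  · refine Finset.mem_insert_of_mem (Finset.mem_image.mpr ⟨x, ?_, rfl⟩)
    rw [Finsupp.mem_support_iff] at hx ⊢
    rw [← h x hfx]; exact hx

lemma insert_image_support_eq (i : D) {m ν : σ →₀ ℕ} (h : ∀ x, f x ≠ i → ν x = m x) :
    insert i (ν.support.image f) = insert i (m.support.image f) :=
  Finset.Subset.antisymm (insert_image_subset_of f i h)
    (insert_image_subset_of f i fun x hx => (h x hx).symm)

lemma coeff_zero_of_big {u : MvPolynomial σ ℝ} {m : σ →₀ ℕ} (s : σ)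
    (h : u.totalDegree + 1 ≤ m s) : coeff m u = 0 := by
  apply coeff_eq_zero_of_totalDegree_lt
  have hs : s ∈ m.support := Finsupp.mem_support_iff.mpr (by omega)
  have : m s ≤ ∑ i ∈ m.support, m i := Finset.single_le_sum (fun i _ => Nat.zero_le _) hs
  omega

lemma coeff_zero_of_domDeg {u : MvPolynomial σ ℝ} {d : ℕ} (hd : domDeg f u ≤ d)
    {μ : σ →₀ ℕ} {i : D} (hiμ : i ∈ μ.support.image f)
    (hbad : d < (insert i (μ.support.image f)).card) : coeff μ u = 0 := by
  by_contra hne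
  have h1 := domDeg_le_iff.mp hd μ (MvPolynomial.mem_support_iff.mpr hne)
  rw [← Finset.insert_eq_self.mpr hiμ] at h1
  omega

private lemma other_add_single {m : σ →₀ ℕ} {s : σ} {i : D} (hfs : f s = i) :
    ∀ x, f x ≠ i → (m + Finsupp.single s 1 : σ →₀ ℕ) x = m x := by
  intro x hx
  have hxs : x ≠ s := fun hh => hx (hh ▸ hfs)
  simp [Finsupp.single_apply, Ne.symm hxs]

private lemma other_add_single_sub {m : σ →₀ ℕ} {a b : σ} {i : D} (hfa : f a = i)
    (hfb : f b = i) : ∀ x, f x ≠ i → (m + Finsupp.single b 1 - Finsupp.single a 1 : σ →₀ ℕ) x = m x := by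
  intro x hx
  have hxa : x ≠ a := fun hh => hx (hh ▸ hfa)
  have hxb : x ≠ b := fun hh => hx (hh ▸ hfb)
  rw [Finsupp.tsub_apply]
  simp [Finsupp.single_apply, Ne.symm hxa, Ne.symm hxb]

/-- Extraction for a clause of shape `X s - c`. -/
lemma extract_one (u : MvPolynomial σ ℝ) (s : σ) (c : ℝ) {d : ℕ}
    (hd : domDeg f (u * (X s - C c)) ≤ d) :
    ∀ m ∈ u.support, (insert (f s) (m.support.image f)).card ≤ d := by
  have key : ∀ t : ℕ, ∀ m : σ →₀ ℕ, u.totalDegree + 1 ≤ m s + t →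
      d < (insert (f s) (m.support.image f)).card → coeff m u = 0 := by
    intro t
    induction t with
    | zero => exact fun m hle _ => coeff_zero_of_big s (by omega)
    | succ t ih =>
      intro m hle hbad
      set μ := m + Finsupp.single s 1 with hμdef
      have hμs : μ s = m s + 1 := by simp [hμdef]
      have hins : insert (f s) (μ.support.image f) = insert (f s) (m.support.image f) :=
        insert_image_support_eq f (f s) (other_add_single f rfl)
      have hiμ : f s ∈ μ.support.image f :=
        Finset.mem_image_of_mem f (Finsupp.mem_support_iff.mpr (by omega))
      have h0 : coeff μ (u * (X s - C c)) = 0 :=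
        coeff_zero_of_domDeg f hd hiμ (by rw [hins]; exact hbad)
      have hexp : coeff μ (u * (X s - C c)) = coeff m u - c * coeff μ u := by
        rw [mul_sub, MvPolynomial.coeff_sub, hμdef, MvPolynomial.coeff_mul_X,
          mul_comm u (C c), MvPolynomial.coeff_C_mul]
      have hμ0 : coeff μ u = 0 := ih μ (by omega) (by rw [hins]; exact hbad)
      rw [hexp, hμ0] at h0
      linarith
  intro m hm
  by_contra hc
  push_neg at hc
  exact absurd (key (u.totalDegree + 1) m (by omega) hc) (MvPolynomial.mem_support_iff.mp hm)

/-- Extraction for `1 - X a - X b`, `b`-free monomials. -/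
lemma extract_deg1 (u : MvPolynomial σ ℝ) (a b : σ) (hab : a ≠ b) {d : ℕ}
    (hd : domDeg f (u * (1 - X a - X b)) ≤ d) :
    ∀ m ∈ u.support, m b = 0 → (insert (f a) (m.support.image f)).card ≤ d := by
  have key : ∀ t : ℕ, ∀ m : σ →₀ ℕ, u.totalDegree + 1 ≤ m a + t → m b = 0 →
      d < (insert (f a) (m.support.image f)).card → coeff m u = 0 := by
    intro t
    induction t with
    | zero => exact fun m hle _ _ => coeff_zero_of_big a (by omega)
    | succ t ih =>
      intro m hle hmb hbad
      set μ := m + Finsupp.single a 1 with hμdef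
      have hμa : μ a = m a + 1 := by simp [hμdef]
      have hμb : μ b = 0 := by
        simp [hμdef, Finsupp.single_apply, hab, hmb]
      have hins : insert (f a) (μ.support.image f) = insert (f a) (m.support.image f) :=
        insert_image_support_eq f (f a) (other_add_single f rfl)
      have hiμ : f a ∈ μ.support.image f :=
        Finset.mem_image_of_mem f (Finsupp.mem_support_iff.mpr (by omega))
      have h0 : coeff μ (u * (1 - X a - X b)) = 0 :=
        coeff_zero_of_domDeg f hd hiμ (by rw [hins]; exact hbad)
      have hbμ' : b ∉ (m + Finsupp.single a 1 : σ →₀ ℕ).support := by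
        rw [Finsupp.mem_support_iff]
        simp [Finsupp.single_apply, hab, hmb]
      have hexp : coeff μ (u * (1 - X a - X b)) = coeff μ u - coeff m u := by
        rw [hμdef, mul_sub, mul_sub, mul_one, MvPolynomial.coeff_sub, MvPolynomial.coeff_sub,
          MvPolynomial.coeff_mul_X, MvPolynomial.coeff_mul_X', if_neg hbμ']
        ring
      have hμ0 : coeff μ u = 0 := ih μ (by omega) hμb (by rw [hins]; exact hbad)
      rw [hexp, hμ0] at h0
      linarith
  intro m hm hmb
  by_contra hc
  push_neg at hc
  exact absurd (key (u.totalDegree + 1) m (by omega) hmb hc)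
    (MvPolynomial.mem_support_iff.mp hm)

/-- Extraction for `1 - X a - X b` with `f a = f b`. -/
lemma extract_two (u : MvPolynomial σ ℝ) (a b : σ) (hab : a ≠ b) (hfab : f a = f b) {d : ℕ}
    (hd : domDeg f (u * (1 - X a - X b)) ≤ d) :
    ∀ m ∈ u.support, (insert (f b) (m.support.image f)).card ≤ d := by
  have key : ∀ t : ℕ, ∀ m : σ →₀ ℕ, u.totalDegree + 1 ≤ m b + t →
      d < (insert (f b) (m.support.image f)).card → coeff m u = 0 := by
    intro t
    induction t with
    | zero => exact fun m hle _ => coeff_zero_of_big b (by omega)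
    | succ t ih =>
      intro m hle hbad
      set μ := m + Finsupp.single b 1 with hμdef
      have hμb : μ b = m b + 1 := by simp [hμdef]
      have hins : insert (f b) (μ.support.image f) = insert (f b) (m.support.image f) :=
        insert_image_support_eq f (f b) (other_add_single f rfl)
      have hiμ : f b ∈ μ.support.image f :=
        Finset.mem_image_of_mem f (Finsupp.mem_support_iff.mpr (by omega))
      have h0 : coeff μ (u * (1 - X a - X b)) = 0 :=
        coeff_zero_of_domDeg f hd hiμ (by rw [hins]; exact hbad)
      have hμ0 : coeff μ u = 0 := ih μ (by omega) (by rw [hins]; exact hbad)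
      have hν0 : (if a ∈ μ.support then coeff (μ - Finsupp.single a 1) u else 0) = 0 := by
        split_ifs with hmem
        · set ν := μ - Finsupp.single a 1 with hνdef
          have hνb : ν b = m b + 1 := by
            rw [hνdef, Finsupp.tsub_apply]
            simp [Finsupp.single_apply, hab, hμb]
          have hinsν : insert (f b) (ν.support.image f) = insert (f b) (m.support.image f) :=
            insert_image_support_eq f (f b) (other_add_single_sub f hfab rfl)
          exact ih ν (by omega) (by rw [hinsν]; exact hbad)
        · rfl
      have hexp : coeff μ (u * (1 - X a - X b)) = coeff μ u -
          (if a ∈ μ.support then coeff (μ - Finsupp.single a 1) u else 0) - coeff m u := by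
        rw [mul_sub, mul_sub, mul_one, MvPolynomial.coeff_sub, MvPolynomial.coeff_sub,
          hμdef, MvPolynomial.coeff_mul_X, MvPolynomial.coeff_mul_X']
      rw [hexp, hμ0, hν0] at h0
      linarith
  intro m hm
  by_contra hc
  push_neg at hc
  exact absurd (key (u.totalDegree + 1) m (by omega) hc) (MvPolynomial.mem_support_iff.mp hm)

/-- Extraction for `X a + X c - X b` with all indices equal. -/
lemma extract_three (u : MvPolynomial σ ℝ) (a b c : σ) (hab : a ≠ b) (hcb : c ≠ b)
    (hfa : f a = f b) (hfc : f c = f b) {d : ℕ}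
    (hd : domDeg f (u * (X a + X c - X b)) ≤ d) :
    ∀ m ∈ u.support, (insert (f b) (m.support.image f)).card ≤ d := by
  have key : ∀ t : ℕ, ∀ m : σ →₀ ℕ, u.totalDegree + 1 ≤ m b + t →
      d < (insert (f b) (m.support.image f)).card → coeff m u = 0 := by
    intro t
    induction t with
    | zero => exact fun m hle _ => coeff_zero_of_big b (by omega)
    | succ t ih =>
      intro m hle hbad
      set μ := m + Finsupp.single b 1 with hμdef
      have hμb : μ b = m b + 1 := by simp [hμdef]
      have hins : insert (f b) (μ.support.image f) = insert (f b) (m.support.image f) :=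
        insert_image_support_eq f (f b) (other_add_single f rfl)
      have hiμ : f b ∈ μ.support.image f :=
        Finset.mem_image_of_mem f (Finsupp.mem_support_iff.mpr (by omega))
      have h0 : coeff μ (u * (X a + X c - X b)) = 0 :=
        coeff_zero_of_domDeg f hd hiμ (by rw [hins]; exact hbad)
      have term0 : ∀ x : σ, x ≠ b → f x = f b →
          (if x ∈ μ.support then coeff (μ - Finsupp.single x 1) u else 0) = 0 := by
        intro x hxb hfx
        split_ifs with hmem
        · set ν := μ - Finsupp.single x 1 with hνdef
          have hνb : ν b = m b + 1 := by
            rw [hνdef, Finsupp.tsub_apply]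
            simp [Finsupp.single_apply, hxb, hμb]
          have hinsν : insert (f b) (ν.support.image f) = insert (f b) (m.support.image f) :=
            insert_image_support_eq f (f b) (other_add_single_sub f hfx rfl)
          exact ih ν (by omega) (by rw [hinsν]; exact hbad)
        · rfl
      have hexp : coeff μ (u * (X a + X c - X b)) =
          (if a ∈ μ.support then coeff (μ - Finsupp.single a 1) u else 0) +
          (if c ∈ μ.support then coeff (μ - Finsupp.single c 1) u else 0) - coeff m u := by
        rw [mul_sub, mul_add, MvPolynomial.coeff_sub, MvPolynomial.coeff_add,
          hμdef, MvPolynomial.coeff_mul_X, MvPolynomial.coeff_mul_X', MvPolynomial.coeff_mul_X']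
      rw [hexp, term0 a hab hfa, term0 c hcb hfc] at h0
      linarith
  intro m hm
  by_contra hc
  push_neg at hc
  exact absurd (key (u.totalDegree + 1) m (by omega) hc) (MvPolynomial.mem_support_iff.mp hm)

end Extract


section Subst

variable {σ τ D : Type*} [DecidableEq σ] [DecidableEq τ] [DecidableEq D]
  (f : σ → D) (g : τ → D) (sub : σ → MvPolynomial τ ℝ)

variable (hsub : ∀ s : σ, IdxLE g ({f s} : Finset D) (sub s))

include hsub

/-- Every monomial of `aeval sub p` has indices within those of some "alive" monomial of `p`. -/
lemma aeval_support_trace (p : MvPolynomial σ ℝ) :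
    ∀ μ ∈ (aeval sub p).support, ∃ m ∈ p.support,
      (∀ s ∈ m.support, sub s ≠ 0) ∧ μ.support.image g ⊆ m.support.image f := by
  intro μ hμ
  rw [← p.support_sum_monomial_coeff, map_sum] at hμ
  obtain ⟨m, hm, hmem⟩ := Finset.mem_biUnion.mp (MvPolynomial.support_sum hμ)
  refine ⟨m, hm, ?_, ?_⟩
  · -- alive
    intro s hs hzero
    rw [aeval_monomial] at hmem
    have : (m.prod fun s e => sub s ^ e) = 0 := by
      rw [Finsupp.prod]
      apply Finset.prod_eq_zero hs
      rw [hzero]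
      exact zero_pow (Finsupp.mem_support_iff.mp hs)
    rw [this, mul_zero] at hmem
    simp at hmem
  · -- index trace
    have hI : IdxLE g (m.support.image f)
        (aeval sub (monomial m (coeff m p)) : MvPolynomial τ ℝ) := by
      rw [aeval_monomial]
      apply idxLE_mul
      · exact idxLE_C _ _
      · rw [Finsupp.prod]
        apply idxLE_prod
        intro s hs
        apply idxLE_pow
        exact idxLE_mono (Finset.singleton_subset_iff.mpr (Finset.mem_image_of_mem f hs))
          (hsub s)
    exact hI μ hmem

lemma domDeg_aeval_le (p : MvPolynomial σ ℝ) {d : ℕ} (hp : domDeg f p ≤ d) :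
    domDeg g (aeval sub p) ≤ d := by
  rw [domDeg_le_iff]
  intro μ hμ
  obtain ⟨m, hm, _, htr⟩ := aeval_support_trace f g sub hsub p μ hμ
  exact le_trans (Finset.card_le_card htr) (domDeg_le_iff.mp hp m hm)

/-- If the clique-side SOS multiplier is "good at i" on alive monomials, so is its image. -/
lemma goodAt_aeval (p : MvPolynomial σ ℝ) {d : ℕ} {i : D}
    (h : ∀ m ∈ p.support, (∀ s ∈ m.support, sub s ≠ 0) →
      (insert i (m.support.image f)).card ≤ d) :
    GoodAt g d i (aeval sub p) := by
  intro μ hμ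
  obtain ⟨m, hm, halive, htr⟩ := aeval_support_trace f g sub hsub p μ hμ
  exact le_trans (Finset.card_le_card (Finset.insert_subset_insert i htr)) (h m hm halive)

end Subst


section Setting

variable {k : ℕ} {n : Fin k → ℕ} {N : ℕ} (e : Fin N ≃ Vtx k n)

/-- Product of `(1 - x_v)` over block-`i` vertices enumerated at position `≥ j`. -/
noncomputable def blkProd (i : Fin k) (j : ℕ) : MvPolynomial (Vtx k n) ℝ :=
  ∏ t ∈ Finset.univ.filter (fun t : Fin N => j ≤ t.val ∧ (e t).1 = i), (1 - X (e t))

/-- Sum of block-`i` variables. -/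
noncomputable def blkSum (k : ℕ) (n : Fin k → ℕ) (i : Fin k) : MvPolynomial (Vtx k n) ℝ :=
  ∑ w : Fin (n i), X (⟨i, w⟩ : Vtx k n)

/-- The substitution defining the reduction. -/
noncomputable def subMap : CliqueVar k n N → MvPolynomial (Vtx k n) ℝ
  | Sum.inl (i, v) => if v.1 = i then X v else 0
  | Sum.inr (i, j) => 1 - blkProd e i j.val

lemma blkSum_sub_one_mem_blockEqs (i : Fin k) : blkSum k n i - 1 ∈ blockEqs k n := ⟨i, rfl⟩

lemma idxLE_blkProd (i : Fin k) (j : ℕ) :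
    IdxLE (Sigma.fst : Vtx k n → Fin k) {i} (blkProd e i j) := by
  apply idxLE_prod
  intro t ht
  have hti : (e t).1 = i := (Finset.mem_filter.mp ht).2.2
  apply idxLE_sub (idxLE_one _)
  rw [← hti]
  exact idxLE_X (e t)

lemma idxLE_blkSum (i : Fin k) : IdxLE (Sigma.fst : Vtx k n → Fin k) {i} (blkSum k n i) := by
  apply idxLE_sum
  intro w _
  exact idxLE_X (⟨i, w⟩ : Vtx k n)

lemma idem_blkProd (i : Fin k) (j : ℕ) :
    (blkProd e i j) ^ 2 - blkProd e i j ∈ multilinIdeal (Vtx k n) := by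
  apply idem_prod
  intro t _
  exact idem_one_sub (X_sq_sub_mem (e t))

lemma blkProd_last (i : Fin k) : blkProd e i N = 1 := by
  rw [blkProd]
  rw [Finset.filter_false_of_mem, Finset.prod_empty]
  intro t _
  rintro ⟨h1, -⟩
  exact absurd h1 (by omega)

lemma blkProd_split (i : Fin k) (j : Fin N) :
    blkProd e i j.val =
      (if (e j).1 = i then (1 - X (e j)) else 1) * blkProd e i (j.val + 1) := by
  by_cases hblk : (e j).1 = i
  · rw [if_pos hblk, blkProd, blkProd]
    have hnot : j ∉ Finset.univ.filter (fun t : Fin N => j.val + 1 ≤ t.val ∧ (e t).1 = i) := by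
      simp
    have hset : Finset.univ.filter (fun t : Fin N => j.val ≤ t.val ∧ (e t).1 = i) =
        insert j (Finset.univ.filter (fun t : Fin N => j.val + 1 ≤ t.val ∧ (e t).1 = i)) := by
      ext t
      simp only [Finset.mem_filter, Finset.mem_univ, true_and, Finset.mem_insert]
      constructor
      · rintro ⟨h1, h2⟩
        by_cases htj : t = j
        · exact Or.inl htj
        · have : j.val ≠ t.val := fun hh => htj (Fin.ext hh.symm)
          exact Or.inr ⟨by omega, h2⟩
      · rintro (rfl | ⟨h1, h2⟩)
        · exact ⟨le_refl _, hblk⟩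
        · exact ⟨by omega, h2⟩
    rw [hset, Finset.prod_insert hnot]
  · rw [if_neg hblk, one_mul, blkProd, blkProd]
    congr 1
    ext t
    simp only [Finset.mem_filter, Finset.mem_univ, true_and]
    constructor
    · rintro ⟨h1, h2⟩
      have htj : t ≠ j := fun hh => hblk (hh ▸ h2)
      have : j.val ≠ t.val := fun hh => htj (Fin.ext hh.symm)
      exact ⟨by omega, h2⟩
    · rintro ⟨h1, h2⟩
      exact ⟨by omega, h2⟩

lemma blkProd_mul_blkSum_mem (i : Fin k) :
    blkProd e i 0 * blkSum k n i ∈ multilinIdeal (Vtx k n) := by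
  rw [blkSum, Finset.mul_sum]
  apply sum_mem
  intro w _
  set v : Vtx k n := ⟨i, w⟩ with hv
  set t0 := e.symm v with ht0def
  have het0 : e t0 = v := Equiv.apply_symm_apply e v
  have ht0 : t0 ∈ Finset.univ.filter (fun t : Fin N => 0 ≤ t.val ∧ (e t).1 = i) := by
    simp [het0, hv]
  rw [blkProd, ← Finset.mul_prod_erase _ _ ht0, het0]
  have key : ∀ (R : MvPolynomial (Vtx k n) ℝ), (1 - X v) * R * X v ∈ multilinIdeal (Vtx k n) := by
    intro R
    have h : (1 - X v) * R * X v = (-R) * (X v ^ 2 - X v) := by ring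
    rw [h]
    exact Ideal.mul_mem_left _ _ (X_sq_sub_mem v)
  exact key _

lemma idxLE_subMap (s : CliqueVar k n N) :
    IdxLE (Sigma.fst : Vtx k n → Fin k) {cliqueIdx s} (subMap e s) := by
  match s with
  | Sum.inl (i, v) =>
    show IdxLE _ {i} _
    rw [subMap]
    split_ifs with hvi
    · rw [← hvi]; exact idxLE_X v
    · exact idxLE_zero _
  | Sum.inr (i, j) =>
    show IdxLE _ {i} _
    exact idxLE_sub (idxLE_one _) (idxLE_blkProd e i j.val)

lemma subMap_sq_mem (s : CliqueVar k n N) :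
    (subMap e s) ^ 2 - subMap e s ∈ multilinIdeal (Vtx k n) := by
  match s with
  | Sum.inl (i, v) =>
    rw [subMap]
    split_ifs with hvi
    · exact X_sq_sub_mem v
    · simp only [ne_eq, zero_pow, sub_zero]
      simpa using zero_mem _
  | Sum.inr (i, j) => exact idem_one_sub (idem_blkProd e i j.val)

lemma aeval_subMap_ml {p : MvPolynomial (CliqueVar k n N) ℝ}
    (hp : p ∈ multilinIdeal (CliqueVar k n N)) :
    aeval (subMap e) p ∈ multilinIdeal (Vtx k n) := by
  refine Submodule.span_induction ?_ ?_ ?_ ?_ hp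
  · rintro x ⟨s, rfl⟩
    rw [map_sub, map_pow, aeval_X]
    exact subMap_sq_mem e s
  · simpa using zero_mem _
  · intro x y _ _ hx hy
    rw [map_add]; exact add_mem hx hy
  · intro a x _ hx
    rw [smul_eq_mul, map_mul]
    exact Ideal.mul_mem_left _ _ hx

end Setting


section BRep

variable {k : ℕ} {n : Fin k → ℕ} {G : SimpleGraph (Vtx k n)} {d : ℕ}

/-- `A` is representable as an SOS combination of block axioms, mod the multilinear ideal,
with all terms of domain-degree at most `d`. -/
def BRep (k : ℕ) (n : Fin k → ℕ) (G : SimpleGraph (Vtx k n)) (d : ℕ)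
    (A : MvPolynomial (Vtx k n) ℝ) : Prop :=
  ∃ (fs hs : List (MvPolynomial (Vtx k n) ℝ × MvPolynomial (Vtx k n) ℝ))
    (u0 : MvPolynomial (Vtx k n) ℝ),
    (∀ q ∈ fs, q.1 ∈ blockEqs k n) ∧ (∀ q ∈ hs, q.1 ∈ blockIneqs k n G) ∧
    (∀ q ∈ hs, IsSOS q.2) ∧ IsSOS u0 ∧
    (∀ q ∈ fs, domDeg (Sigma.fst : Vtx k n → Fin k) (q.2 * q.1) ≤ d) ∧
    (∀ q ∈ hs, domDeg (Sigma.fst : Vtx k n → Fin k) (q.2 * q.1) ≤ d) ∧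
    domDeg (Sigma.fst : Vtx k n → Fin k) u0 ≤ d ∧
    A - ((fs.map fun q => q.2 * q.1).sum + (hs.map fun q => q.2 * q.1).sum + u0)
      ∈ multilinIdeal (Vtx k n)

lemma brep_of_mem_ml {A : MvPolynomial (Vtx k n) ℝ} (h : A ∈ multilinIdeal (Vtx k n)) :
    BRep k n G d A := by
  refine ⟨[], [], 0, by simp, by simp, by simp, IsSOS.zero, by simp, by simp, ?_, by simpa⟩
  rw [domDeg_zero]
  exact Nat.zero_le _

lemma BRep.add {A B : MvPolynomial (Vtx k n) ℝ} (hA : BRep k n G d A) (hB : BRep k n G d B) :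
    BRep k n G d (A + B) := by
  obtain ⟨fs1, hs1, u1, h1a, h1b, h1c, h1d, h1e, h1f, h1g, h1h⟩ := hA
  obtain ⟨fs2, hs2, u2, h2a, h2b, h2c, h2d, h2e, h2f, h2g, h2h⟩ := hB
  refine ⟨fs1 ++ fs2, hs1 ++ hs2, u1 + u2, ?_, ?_, ?_, h1d.add h2d, ?_, ?_,
    domDeg_add_le h1g h2g, ?_⟩
  · intro q hq; rcases List.mem_append.mp hq with h | h
    exacts [h1a q h, h2a q h]
  · intro q hq; rcases List.mem_append.mp hq with h | h
    exacts [h1b q h, h2b q h]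
  · intro q hq; rcases List.mem_append.mp hq with h | h
    exacts [h1c q h, h2c q h]
  · intro q hq; rcases List.mem_append.mp hq with h | h
    exacts [h1e q h, h2e q h]
  · intro q hq; rcases List.mem_append.mp hq with h | h
    exacts [h1f q h, h2f q h]
  · rw [List.map_append, List.map_append, List.sum_append, List.sum_append]
    have heq : A + B -
        (((fs1.map fun q => q.2 * q.1).sum + (fs2.map fun q => q.2 * q.1).sum) +
          ((hs1.map fun q => q.2 * q.1).sum + (hs2.map fun q => q.2 * q.1).sum) + (u1 + u2)) =
        (A - ((fs1.map fun q => q.2 * q.1).sum + (hs1.map fun q => q.2 * q.1).sum + u1)) +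
        (B - ((fs2.map fun q => q.2 * q.1).sum + (hs2.map fun q => q.2 * q.1).sum + u2)) := by
      ring
    rw [heq]
    exact add_mem h1h h2h

lemma BRep.congr {A B : MvPolynomial (Vtx k n) ℝ} (hA : BRep k n G d A)
    (hBA : B - A ∈ multilinIdeal (Vtx k n)) : BRep k n G d B := by
  obtain ⟨fs, hs, u0, ha, hb, hc, hd', he, hf, hg, hh⟩ := hA
  refine ⟨fs, hs, u0, ha, hb, hc, hd', he, hf, hg, ?_⟩
  have heq : B - ((fs.map fun q => q.2 * q.1).sum + (hs.map fun q => q.2 * q.1).sum + u0) =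
      (B - A) + (A - ((fs.map fun q => q.2 * q.1).sum + (hs.map fun q => q.2 * q.1).sum + u0)) := by
    ring
  rw [heq]
  exact add_mem hBA hh

lemma rep_sos {v : MvPolynomial (Vtx k n) ℝ} (hsos : IsSOS v)
    (hdd : domDeg (Sigma.fst : Vtx k n → Fin k) v ≤ d) : BRep k n G d v := by
  refine ⟨[], [], v, by simp, by simp, by simp, hsos, by simp, by simp, hdd, ?_⟩
  simpa using zero_mem _

lemma rep_eqterm {f g : MvPolynomial (Vtx k n) ℝ} (hf : f ∈ blockEqs k n)
    (hdd : domDeg (Sigma.fst : Vtx k n → Fin k) (g * f) ≤ d) : BRep k n G d (g * f) := by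
  refine ⟨[(f, g)], [], 0, ?_, by simp, by simp, IsSOS.zero, ?_, by simp, ?_, ?_⟩
  · intro q hq; rw [List.mem_singleton] at hq; subst hq; exact hf
  · intro q hq; rw [List.mem_singleton] at hq; subst hq; exact hdd
  · rw [domDeg_zero]; exact Nat.zero_le _
  · simpa using zero_mem _

lemma rep_ineqterm {h g : MvPolynomial (Vtx k n) ℝ} (hh : h ∈ blockIneqs k n G)
    (hg : IsSOS g) (hdd : domDeg (Sigma.fst : Vtx k n → Fin k) (g * h) ≤ d) :
    BRep k n G d (g * h) := by
  refine ⟨[], [(h, g)], 0, by simp, ?_, ?_, IsSOS.zero, by simp, ?_, ?_, ?_⟩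
  · intro q hq; rw [List.mem_singleton] at hq; subst hq; exact hh
  · intro q hq; rw [List.mem_singleton] at hq; subst hq; exact hg
  · intro q hq; rw [List.mem_singleton] at hq; subst hq; exact hdd
  · rw [domDeg_zero]; exact Nat.zero_le _
  · simpa using zero_mem _

/-- The workhorse: `v · ((1 - Σ_i) + Σ_{w ∈ T} x_w)` is representable when `v` is SOS and
good at block `i`. -/
lemma rep_block (i : Fin k) (T : Finset (Fin (n i))) {v : MvPolynomial (Vtx k n) ℝ}
    (hsos : IsSOS v) (hv : GoodAt (Sigma.fst : Vtx k n → Fin k) d i v) :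
    BRep k n G d (v * ((1 - blkSum k n i) + ∑ w ∈ T, X (⟨i, w⟩ : Vtx k n))) := by
  have hsum_sq : IsSOS (v * ∑ w ∈ T, (X (⟨i, w⟩ : Vtx k n)) ^ 2) :=
    hsos.mul_sum_sq T _
  have hidx_sum_sq : IdxLE (Sigma.fst : Vtx k n → Fin k) {i} (∑ w ∈ T, (X (⟨i, w⟩ : Vtx k n)) ^ 2) :=
    idxLE_sum T _ fun w _ => idxLE_pow (idxLE_X _) 2
  have hidx_eq : IdxLE (Sigma.fst : Vtx k n → Fin k) {i} (blkSum k n i - 1) :=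
    idxLE_sub (idxLE_blkSum i) (idxLE_one _)
  have rep1 : BRep k n G d ((-v) * (blkSum k n i - 1)) := by
    apply rep_eqterm (blkSum_sub_one_mem_blockEqs i)
    exact GoodAt.domDeg_mul_le hv.neg hidx_eq
  have rep2 : BRep k n G d (v * ∑ w ∈ T, (X (⟨i, w⟩ : Vtx k n)) ^ 2) :=
    rep_sos hsum_sq (GoodAt.domDeg_mul_le hv hidx_sum_sq)
  refine (rep1.add rep2).congr ?_
  have heq : v * ((1 - blkSum k n i) + ∑ w ∈ T, X (⟨i, w⟩ : Vtx k n)) -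
      ((-v) * (blkSum k n i - 1) + v * ∑ w ∈ T, (X (⟨i, w⟩ : Vtx k n)) ^ 2) =
      -(v * (∑ w ∈ T, ((X (⟨i, w⟩ : Vtx k n)) ^ 2 - X (⟨i, w⟩ : Vtx k n)))) := by
    rw [Finset.sum_sub_distrib]
    ring
  rw [heq]
  apply neg_mem
  apply Ideal.mul_mem_left
  exact sum_mem fun w _ => X_sq_sub_mem _
end BRep


section Clauses

variable {k : ℕ} {n : Fin k → ℕ} {N : ℕ} {G : SimpleGraph (Vtx k n)} (e : Fin N ≃ Vtx k n)
  {d : ℕ}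

local notation "φ" => (aeval (subMap e) :
  MvPolynomial (CliqueVar k n N) ℝ →ₐ[ℝ] MvPolynomial (Vtx k n) ℝ)

lemma hsubM : ∀ s : CliqueVar k n N,
    IdxLE (Sigma.fst : Vtx k n → Fin k) {cliqueIdx s} (subMap e s) := idxLE_subMap e

/-- clause type (3): `z_{i,0} - 1`. -/
lemma clause_rep3 (u : MvPolynomial (CliqueVar k n N) ℝ) (hu : IsSOS u) (i : Fin k)
    (hd : domDeg cliqueIdx (u * (X (Sum.inr (i, (0 : Fin (N + 1)))) - 1)) ≤ d) :
    BRep k n G d (φ (u * (X (Sum.inr (i, (0 : Fin (N + 1)))) - 1))) := by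
  have EXT := extract_one (d := d) cliqueIdx u (Sum.inr (i, (0 : Fin (N + 1)))) 1 (by rw [C_1]; exact hd)
  have hgood : GoodAt (Sigma.fst : Vtx k n → Fin k) d i (φ u) :=
    goodAt_aeval cliqueIdx Sigma.fst (subMap e) (hsubM e) u (fun m hm _ => EXT m hm)
  have himg : φ (X (Sum.inr (i, (0 : Fin (N + 1)))) - 1) = -(blkProd e i 0) := by
    rw [map_sub, map_one, aeval_X]
    show (1 - blkProd e i ((0 : Fin (N + 1)) : ℕ)) - 1 = _
    simp
  have hrep : BRep k n G d ((φ u * blkProd e i 0) * (blkSum k n i - 1)) := by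
    apply rep_eqterm (blkSum_sub_one_mem_blockEqs i)
    exact GoodAt.domDeg_mul_le (hgood.mul (idxLE_blkProd e i 0))
      (idxLE_sub (idxLE_blkSum i) (idxLE_one _))
  refine hrep.congr ?_
  have heq : φ (u * (X (Sum.inr (i, (0 : Fin (N + 1)))) - 1)) -
      (φ u * blkProd e i 0) * (blkSum k n i - 1) =
      -(φ u * (blkProd e i 0 * blkSum k n i)) := by
    rw [map_mul, himg]; ring
  rw [heq]
  exact neg_mem (Ideal.mul_mem_left _ _ (blkProd_mul_blkSum_mem e i))

/-- clause type (5): `(1 - z_{i,N}) - 1`. -/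
lemma clause_rep5 (u : MvPolynomial (CliqueVar k n N) ℝ) (i : Fin k) :
    BRep k n G d (φ (u * ((1 - X (Sum.inr (i, Fin.last N))) - 1))) := by
  have himg : φ ((1 - X (Sum.inr (i, Fin.last N))) - 1) = 0 := by
    rw [map_sub, map_sub, map_one, aeval_X]
    show (1 - (1 - blkProd e i ((Fin.last N : Fin (N + 1)) : ℕ))) - 1 = 0
    rw [Fin.val_last, blkProd_last]
    ring
  rw [map_mul, himg, mul_zero]
  exact brep_of_mem_ml (zero_mem _)

/-- clause type (4): telescoping clause. -/
lemma clause_rep4 (u : MvPolynomial (CliqueVar k n N) ℝ) (hu : IsSOS u) (i : Fin k) (j : Fin N)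
    (hd : domDeg cliqueIdx (u * (((1 - X (Sum.inr (i, j.castSucc))) + X (Sum.inl (i, e j))
      + X (Sum.inr (i, j.succ))) - 1)) ≤ d) :
    BRep k n G d (φ (u * (((1 - X (Sum.inr (i, j.castSucc))) + X (Sum.inl (i, e j))
      + X (Sum.inr (i, j.succ))) - 1))) := by
  set a : CliqueVar k n N := Sum.inl (i, e j) with ha
  set b : CliqueVar k n N := Sum.inr (i, j.castSucc) with hb
  set c : CliqueVar k n N := Sum.inr (i, j.succ) with hc
  have hform : ((1 - X b) + X a + X c) - 1 = (X a + X c - X b : MvPolynomial (CliqueVar k n N) ℝ) := by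
    ring
  have hab : a ≠ b := by simp [ha, hb]
  have hcb : c ≠ b := by
    simp only [hc, hb, ne_eq, Sum.inr.injEq, Prod.mk.injEq, not_and]
    intro _ hh
    have h2 := congrArg Fin.val hh
    rw [Fin.val_succ, Fin.coe_castSucc] at h2
    omega
  have EXT := extract_three (d := d) cliqueIdx u a b c hab hcb rfl rfl
    (by rw [← hform]; exact hd)
  have hgood : GoodAt (Sigma.fst : Vtx k n → Fin k) d i (φ u) :=
    goodAt_aeval cliqueIdx Sigma.fst (subMap e) (hsubM e) u (fun m hm _ => EXT m hm)
  have himg : φ (((1 - X b) + X a + X c) - 1) =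
      if (e j).1 = i then X (e j) * (1 - blkProd e i (j.val + 1)) else 0 := by
    simp only [map_sub, map_add, map_one, aeval_X]
    show (1 - (1 - blkProd e i ((j.castSucc : Fin (N + 1)) : ℕ)))
        + (if (e j).1 = i then X (e j) else 0)
        + (1 - blkProd e i ((j.succ : Fin (N + 1)) : ℕ)) - 1 = _
    rw [Fin.coe_castSucc, Fin.val_succ, blkProd_split e i j]
    split_ifs with hblk
    · ring
    · ring
  by_cases hblk : (e j).1 = i
  · set q := X (e j) * (1 - blkProd e i (j.val + 1)) with hq
    have hq_idem : q ^ 2 - q ∈ multilinIdeal (Vtx k n) :=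
      idem_mul (X_sq_sub_mem (e j)) (idem_one_sub (idem_blkProd e i (j.val + 1)))
    have hq_idx : IdxLE (Sigma.fst : Vtx k n → Fin k) {i} q := by
      apply idxLE_mul
      · rw [← hblk]; exact idxLE_X (e j)
      · exact idxLE_sub (idxLE_one _) (idxLE_blkProd e i (j.val + 1))
    have hB : BRep k n G d (φ u * q ^ 2) := by
      apply rep_sos ((IsSOS.map _ hu).mul_sq q)
      exact GoodAt.domDeg_mul_le hgood (idxLE_pow hq_idx 2)
    rw [map_mul, himg, if_pos hblk]
    refine hB.congr ?_
    have heq : φ u * q - φ u * q ^ 2 = -(φ u * (q ^ 2 - q)) := by ring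
    rw [heq]
    exact neg_mem (Ideal.mul_mem_left _ _ hq_idem)
  · rw [map_mul, himg, if_neg hblk, mul_zero]
    exact brep_of_mem_ml (zero_mem _)

lemma one_sub_X_decomp (v : Vtx k n) :
    (1 - X v : MvPolynomial (Vtx k n) ℝ) =
      (1 - blkSum k n v.1) + ∑ w ∈ Finset.univ.erase v.2, X (⟨v.1, w⟩ : Vtx k n) := by
  have hb : blkSum k n v.1 = X v + ∑ w ∈ Finset.univ.erase v.2, X (⟨v.1, w⟩ : Vtx k n) := by
    rw [blkSum, ← Finset.add_sum_erase _ _ (Finset.mem_univ v.2)]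
  rw [hb]; ring

lemma two_sub_X_decomp (i : Fin k) (w1 w2 : Fin (n i)) (hw : w1 ≠ w2) :
    (1 - X (⟨i, w1⟩ : Vtx k n) - X (⟨i, w2⟩ : Vtx k n) : MvPolynomial (Vtx k n) ℝ) =
      (1 - blkSum k n i) +
        ∑ w ∈ (Finset.univ.erase w1).erase w2, X (⟨i, w⟩ : Vtx k n) := by
  have h2 : w2 ∈ Finset.univ.erase w1 := Finset.mem_erase.mpr ⟨Ne.symm hw, Finset.mem_univ _⟩
  have hb : blkSum k n i = X (⟨i, w1⟩ : Vtx k n) + (X (⟨i, w2⟩ : Vtx k n) +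
      ∑ w ∈ (Finset.univ.erase w1).erase w2, X (⟨i, w⟩ : Vtx k n)) := by
    rw [blkSum, ← Finset.add_sum_erase _ _ (Finset.mem_univ w1), ← Finset.add_sum_erase _ _ h2]
  rw [hb]; ring

/-- clause type (2): same-position pair. -/
lemma clause_rep2 (u : MvPolynomial (CliqueVar k n N) ℝ) (hu : IsSOS u) (i : Fin k)
    (uv vv : Vtx k n) (huv : uv ≠ vv)
    (hd : domDeg cliqueIdx (u * (1 - X (Sum.inl (i, uv)) - X (Sum.inl (i, vv)))) ≤ d) :
    BRep k n G d (φ (u * (1 - X (Sum.inl (i, uv)) - X (Sum.inl (i, vv))))) := by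
  have hab : (Sum.inl (i, uv) : CliqueVar k n N) ≠ Sum.inl (i, vv) := by
    intro hh
    rw [Sum.inl.injEq, Prod.mk.injEq] at hh
    exact huv hh.2
  have EXT := extract_two (d := d) cliqueIdx u _ _ hab rfl hd
  have hgood : GoodAt (Sigma.fst : Vtx k n → Fin k) d i (φ u) :=
    goodAt_aeval cliqueIdx Sigma.fst (subMap e) (hsubM e) u (fun m hm _ => EXT m hm)
  have himg : φ (1 - X (Sum.inl (i, uv)) - X (Sum.inl (i, vv))) =
      1 - (if uv.1 = i then X uv else 0) - (if vv.1 = i then X vv else 0) := by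
    simp only [map_sub, map_one, aeval_X]
    rfl
  rw [map_mul, himg]
  by_cases h1 : uv.1 = i <;> by_cases h2 : vv.1 = i
  · -- both vertices in block i
    rw [if_pos h1, if_pos h2]
    obtain ⟨i1, w1⟩ := uv
    obtain ⟨i2, w2⟩ := vv
    have hi1 : i1 = i := h1
    have hi2 : i2 = i := h2
    subst hi1; subst hi2
    have hw : w1 ≠ w2 := by
      intro hh; exact huv (by rw [hh])
    rw [two_sub_X_decomp i2 w1 w2 hw]
    exact rep_block i2 _ (IsSOS.map _ hu) hgood
  · rw [if_pos h1, if_neg h2, sub_zero, one_sub_X_decomp uv]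
    rw [← h1] at hgood
    exact rep_block uv.1 _ (IsSOS.map _ hu) hgood
  · rw [if_neg h1, if_pos h2]
    have hz : (1 - 0 - X vv : MvPolynomial (Vtx k n) ℝ) = 1 - X vv := by ring
    rw [hz, one_sub_X_decomp vv]
    rw [← h2] at hgood
    exact rep_block vv.1 _ (IsSOS.map _ hu) hgood
  · rw [if_neg h1, if_neg h2]
    have hz : (1 - 0 - 0 : MvPolynomial (Vtx k n) ℝ) = 1 := by ring
    rw [hz, mul_one]
    exact rep_sos (IsSOS.map _ hu) hgood.domDeg_le

/-- clause type (1): cross-position pair. -/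
lemma clause_rep1 (u : MvPolynomial (CliqueVar k n N) ℝ) (hu : IsSOS u) (i i' : Fin k)
    (uv vv : Vtx k n) (hii : i ≠ i') (hadj : ¬ G.Adj uv vv)
    (hd : domDeg cliqueIdx (u * (1 - X (Sum.inl (i, uv)) - X (Sum.inl (i', vv)))) ≤ d) :
    BRep k n G d (φ (u * (1 - X (Sum.inl (i, uv)) - X (Sum.inl (i', vv))))) := by
  have hab : (Sum.inl (i, uv) : CliqueVar k n N) ≠ Sum.inl (i', vv) := by
    intro hh
    rw [Sum.inl.injEq, Prod.mk.injEq] at hh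
    exact hii hh.1
  have himg : φ (1 - X (Sum.inl (i, uv)) - X (Sum.inl (i', vv))) =
      1 - (if uv.1 = i then X uv else 0) - (if vv.1 = i' then X vv else 0) := by
    simp only [map_sub, map_one, aeval_X]
    rfl
  have hdd := domDeg_aeval_le cliqueIdx Sigma.fst (subMap e) (hsubM e)
    (u * (1 - X (Sum.inl (i, uv)) - X (Sum.inl (i', vv)))) hd
  rw [map_mul, himg] at hdd ⊢
  by_cases h1 : uv.1 = i <;> by_cases h2 : vv.1 = i'
  · -- genuine block inequality
    rw [if_pos h1, if_pos h2] at hdd ⊢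
    have hbi : (1 - X uv - X vv : MvPolynomial (Vtx k n) ℝ) ∈ blockIneqs k n G :=
      ⟨uv, vv, by rw [h1, h2]; exact hii, hadj, rfl⟩
    exact rep_ineqterm hbi (IsSOS.map _ hu) hdd
  · rw [if_pos h1, if_neg h2, sub_zero]
    have hbz : subMap e (Sum.inl (i', vv)) = 0 := by
      show (if vv.1 = i' then X vv else 0) = 0
      rw [if_neg h2]
    have EXT := extract_deg1 (d := d) cliqueIdx u (Sum.inl (i, uv)) (Sum.inl (i', vv)) hab hd
    have hgood : GoodAt (Sigma.fst : Vtx k n → Fin k) d i (φ u) := by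
      apply goodAt_aeval cliqueIdx Sigma.fst (subMap e) (hsubM e) u
      intro m hm halive
      refine EXT m hm ?_
      by_contra hmb
      exact (halive _ (Finsupp.mem_support_iff.mpr hmb)) hbz
    rw [one_sub_X_decomp uv]
    rw [← h1] at hgood
    exact rep_block uv.1 _ (IsSOS.map _ hu) hgood
  · rw [if_neg h1, if_pos h2]
    have hz : (1 - 0 - X vv : MvPolynomial (Vtx k n) ℝ) = 1 - X vv := by ring
    rw [hz]
    have haz : subMap e (Sum.inl (i, uv)) = 0 := by
      show (if uv.1 = i then X uv else 0) = 0
      rw [if_neg h1]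
    have hd' : domDeg cliqueIdx (u * (1 - X (Sum.inl (i', vv)) - X (Sum.inl (i, uv)))) ≤ d := by
      have hcomm : u * (1 - X (Sum.inl (i', vv)) - X (Sum.inl (i, uv)))
          = u * (1 - X (Sum.inl (i, uv)) - X (Sum.inl (i', vv))) := by ring
      rw [hcomm]; exact hd
    have EXT := extract_deg1 (d := d) cliqueIdx u (Sum.inl (i', vv)) (Sum.inl (i, uv))
      (Ne.symm hab) hd'
    have hgood : GoodAt (Sigma.fst : Vtx k n → Fin k) d i' (φ u) := by
      apply goodAt_aeval cliqueIdx Sigma.fst (subMap e) (hsubM e) u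
      intro m hm halive
      refine EXT m hm ?_
      by_contra hma
      exact (halive _ (Finsupp.mem_support_iff.mpr hma)) haz
    rw [one_sub_X_decomp vv]
    rw [← h2] at hgood
    exact rep_block vv.1 _ (IsSOS.map _ hu) hgood
  · rw [if_neg h1, if_neg h2] at hdd ⊢
    have hz : (1 - 0 - 0 : MvPolynomial (Vtx k n) ℝ) = 1 := by ring
    rw [hz, mul_one] at hdd ⊢
    exact rep_sos (IsSOS.map _ hu) hdd

end Clauses


section Main

variable {k : ℕ} {n : Fin k → ℕ} {N : ℕ} {G : SimpleGraph (Vtx k n)} (e : Fin N ≃ Vtx k n)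
  {d : ℕ}

lemma brep_list_sum (l : List (MvPolynomial (Vtx k n) ℝ))
    (h : ∀ A ∈ l, BRep k n G d A) : BRep k n G d l.sum := by
  induction l with
  | nil => simpa using brep_of_mem_ml (zero_mem _)
  | cons a t ih =>
    rw [List.sum_cons]
    exact (h a List.mem_cons_self).add (ih fun A hA => h A (List.mem_cons_of_mem _ hA))

lemma clause_rep (u h : MvPolynomial (CliqueVar k n N) ℝ) (hu : IsSOS u)
    (hmem : h ∈ cliqueIneqs k n N G e) (hd : domDeg cliqueIdx (u * h) ≤ d) :
    BRep k n G d (aeval (subMap e) (u * h)) := by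
  rcases hmem with ((((⟨i, i', uu, vv, hii, hadj, rfl⟩ | ⟨i, uu, vv, huv, rfl⟩) | ⟨i, rfl⟩) |
    ⟨i, j, rfl⟩) | ⟨i, rfl⟩)
  · exact clause_rep1 e u hu i i' uu vv hii hadj hd
  · exact clause_rep2 e u hu i uu vv huv hd
  · exact clause_rep3 e u hu i hd
  · exact clause_rep4 e u hu i j hd
  · exact clause_rep5 e u i

end Main

/-- If `Clique_k(G)` (for a `k`-partite graph `G`) has a sums-of-squares refutation of
domain-degree `d`, then `Block_k(G)` has a sums-of-squares refutation of domain-degree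
`d`. -/
theorem clique_to_block_domdeg (k : ℕ) (n : Fin k → ℕ) (G : SimpleGraph (Vtx k n))
    (hpart : ∀ u v : Vtx k n, G.Adj u v → u.1 ≠ v.1)
    (N : ℕ) (e : Fin N ≃ Vtx k n) (d : ℕ)
    (h : HasSOSRefutationDomDeg cliqueIdx (∅ : Set (MvPolynomial (CliqueVar k n N) ℝ))
          (cliqueIneqs k n N G e) d) :
    HasSOSRefutationDomDeg (Sigma.fst : Vtx k n → Fin k) (blockEqs k n)
      (blockIneqs k n G) d := by
  classical
  obtain ⟨fs, hs, u0, hfs, hhs, hsos, hu0, hdfs, hdhs, hdu0, hml⟩ := h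
  have hfs0 : fs = [] := by
    cases fs with
    | nil => rfl
    | cons a t => exact absurd (hfs a List.mem_cons_self) (Set.notMem_empty _)
  subst hfs0
  simp only [List.map_nil, List.sum_nil, zero_add] at hml
  have hrepsum : BRep k n G d ((hs.map fun q => aeval (subMap e) (q.2 * q.1)).sum) := by
    apply brep_list_sum
    intro A hA
    obtain ⟨q, hq, rfl⟩ := List.mem_map.mp hA
    exact clause_rep e q.2 q.1 (hsos q hq) (hhs q hq) (hdhs q hq)
  have hrepu0 : BRep k n G d (aeval (subMap e) u0) :=
    rep_sos (IsSOS.map _ hu0) (domDeg_aeval_le cliqueIdx Sigma.fst (subMap e) (hsubM e) u0 hdu0)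
  have hrepE : BRep k n G d (aeval (subMap e)
      ((-1 : MvPolynomial (CliqueVar k n N) ℝ) - ((hs.map fun q => q.2 * q.1).sum + u0))) :=
    brep_of_mem_ml (aeval_subMap_ml e hml)
  have hEimg : aeval (subMap e)
      ((-1 : MvPolynomial (CliqueVar k n N) ℝ) - ((hs.map fun q => q.2 * q.1).sum + u0)) =
      -1 - ((hs.map fun q => aeval (subMap e) (q.2 * q.1)).sum + aeval (subMap e) u0) := by
    rw [map_sub, map_neg, map_one, map_add, map_list_sum, List.map_map]
    rfl
  have final : BRep k n G d (-1 : MvPolynomial (Vtx k n) ℝ) := by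
    refine ((hrepsum.add hrepu0).add hrepE).congr ?_
    have hz : (-1 : MvPolynomial (Vtx k n) ℝ) -
        (((hs.map fun q => aeval (subMap e) (q.2 * q.1)).sum + aeval (subMap e) u0) +
          aeval (subMap e)
            ((-1 : MvPolynomial (CliqueVar k n N) ℝ) -
              ((hs.map fun q => q.2 * q.1).sum + u0))) = 0 := by
      rw [hEimg]; ring
    rw [hz]
    exact zero_mem _
  obtain ⟨fs', hs', u0', h1, h2, h3, h4, h5, h6, h7, h8⟩ := final
  exact ⟨fs', hs', u0', h1, h2, h3, h4, h5, h6, h7, h8⟩
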